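/- Let G be a group, and define recursively K_{G,1} = G ≀ ℤ and K_{G,n+1} = K_{G,n} ≀ ℤ. Then the n-th term of the derived series of K_{G,n} is isomorphic to the direct power G^{ℤ^n}. -/

import Mathlib

/-- The translation action of `B` on the base group `B → G` of the regular wreath product. -/
def wrAut (G B : Type*) [Group G] [Group B] : B →* MulAut (B → G) where
  toFun b :=
    { toFun := fun f x => f (x * b)
      invFun := fun f x => f (x * b⁻¹)
      left_inv := fun f => by funext x; simp [mul_assoc]
      right_inv := fun f => by funext x; simp [mul_assoc]
      map_mul' := fun f g => rfl }
  map_one' := by ext f x; simp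
  map_mul' := fun a b => by ext f x; simp [mul_assoc]

/-- The regular wreath product `G ≀ B`. -/
abbrev Wr (G B : Type*) [Group G] [Group B] : Type _ :=
  SemidirectProduct (B → G) B (wrAut G B)

/-- The infinite cyclic group, written multiplicatively. -/
abbrev Zm : Type := Multiplicative ℤ

/-- The generator  of the infinite cyclic group. -/
abbrev zGen : Zm := Multiplicative.ofAdd 1
/-- The iterated wreath products: KGn G 0 = G wr Z, KGn G (n+1) = (KGn G n) wr Z,
so that KGn G (n-1) is the group written K_{G,n} in the paper. -/
def KGn (G : Type u) [Group G] : ℕ → GrpCat.{u}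
  | 0 => GrpCat.of (Wr G Zm)
  | (n + 1) => GrpCat.of (Wr (KGn G n) Zm)

section Solve

variable {K : Type*} [Group K]

/-- values of the coboundary solution at nonnegative integers -/
def solvePos (f : ℤ → K) : ℕ → K
  | 0 => 1
  | n + 1 => (f n)⁻¹ * solvePos f n

/-- values of the coboundary solution at negative integers -/
def solveNeg (f : ℤ → K) : ℕ → K
  | 0 => f (Int.negSucc 0)
  | n + 1 => f (Int.negSucc (n + 1)) * solveNeg f n

/-- the solution `g` of `g m = f m * g (m+1)`. -/
def solveZ (f : ℤ → K) : ℤ → K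
  | Int.ofNat n => solvePos f n
  | Int.negSucc n => solveNeg f n

lemma solveZ_rec (f : ℤ → K) (m : ℤ) : solveZ f m = f m * solveZ f (m + 1) := by
  cases m with
  | ofNat n =>
    rw [show (Int.ofNat n) + 1 = Int.ofNat (n + 1) from rfl]
    show solvePos f n = f n * solvePos f (n + 1)
    rw [solvePos, ← mul_assoc, mul_inv_cancel, one_mul]
  | negSucc n =>
    cases n with
    | zero =>
      rw [show (Int.negSucc 0) + 1 = Int.ofNat 0 from rfl]
      show solveNeg f 0 = f (Int.negSucc 0) * solvePos f 0
      rw [solveNeg, solvePos, mul_one]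
    | succ k =>
      rw [show (Int.negSucc (k + 1)) + 1 = Int.negSucc k from rfl]
      show solveNeg f (k + 1) = f (Int.negSucc (k + 1)) * solveNeg f k
      rw [solveNeg]

end Solve

section WrComm

open scoped commutatorElement

variable {K : Type u} [Group K]

lemma wrAut_apply {G B : Type*} [Group G] [Group B] (b : B) (f : B → G) (x : B) :
    wrAut G B b f x = f (x * b) := rfl

/-- solution of the multiplicative coboundary equation over `Zm`. -/
def gfun (f : Zm → K) : Zm → K := fun x => solveZ (fun m => f (Multiplicative.ofAdd m)) x.toAdd

lemma gfun_spec (f : Zm → K) (x : Zm) : gfun f x * (gfun f (x * zGen))⁻¹ = f x := by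
  have h : (x * zGen).toAdd = x.toAdd + 1 := by simp [zGen]
  have := solveZ_rec (fun m => f (Multiplicative.ofAdd m)) x.toAdd
  simp only [ofAdd_toAdd] at this
  rw [gfun, gfun, h, this]
  simp

lemma wr_commutator (g : Zm → K) :
    ⁅(⟨g, 1⟩ : Wr K Zm), (⟨1, zGen⟩ : Wr K Zm)⁆
      = ⟨fun x => g x * (g (x * zGen))⁻¹, 1⟩ := by
  ext x <;>
    simp [commutatorElement_def, SemidirectProduct.mul_left, SemidirectProduct.mul_right,
      SemidirectProduct.inv_left, SemidirectProduct.inv_right, wrAut_apply]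

end WrComm

section PiWr

open scoped commutatorElement

variable (K : Type u) [Group K] (J : Type w)

/-- projection of a power of a wreath product onto the power of the top group. -/
def rightPi : (J → Wr K Zm) →* (J → Zm) :=
  (SemidirectProduct.rightHom : Wr K Zm →* Zm).compLeft J

lemma mem_rightPi_ker {F : J → Wr K Zm} (h : F ∈ (rightPi K J).ker) (j : J) :
    (F j).right = 1 :=
  congrFun (MonoidHom.mem_ker.mp h) j

lemma commutator_pi_wr : commutator (J → Wr K Zm) = (rightPi K J).ker := by
  apply le_antisymm
  · rw [commutator_def, Subgroup.commutator_le]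
    intro p _ q _
    rw [MonoidHom.mem_ker, map_commutatorElement]
    exact commutatorElement_eq_one_iff_commute.mpr (Commute.all _ _)
  · intro F hF
    have hright := mem_rightPi_ker K J hF
    have hF' : F = ⁅(fun j => (⟨gfun (F j).left, 1⟩ : Wr K Zm)),
        (fun _ => (⟨1, zGen⟩ : Wr K Zm))⁆ := by
      funext j
      show F j = ⁅(⟨gfun (F j).left, 1⟩ : Wr K Zm), (⟨1, zGen⟩ : Wr K Zm)⁆
      rw [wr_commutator]
      ext x
      · exact (gfun_spec (F j).left x).symm
      · exact hright j
    rw [commutator_def, hF']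
    exact Subgroup.commutator_mem_commutator (Subgroup.mem_top _) (Subgroup.mem_top _)

/-- The kernel of the projection is the direct power of `K` by `J × Zm`. -/
def kerIso : ↥((rightPi K J).ker) ≃* ((J × Zm) → K) where
  toFun F := fun p => ((F : J → Wr K Zm) p.1).left p.2
  invFun h := ⟨fun j => ⟨fun z => h (j, z), 1⟩, by
    rw [MonoidHom.mem_ker]; rfl⟩
  left_inv F := by
    apply Subtype.ext
    funext j
    exact SemidirectProduct.ext rfl (mem_rightPi_ker K J F.2 j).symm
  right_inv h := rfl
  map_mul' F₁ F₂ := by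
    funext p
    show ((F₁ : J → Wr K Zm) p.1 * (F₂ : J → Wr K Zm) p.1).left p.2 = _
    rw [SemidirectProduct.mul_left, Pi.mul_apply, wrAut_apply,
      mem_rightPi_ker K J F₁.2 p.1, mul_one]
    rfl

end PiWr

section DerivedTransfer

/-- derived series is preserved by isomorphisms. -/
noncomputable def derivedSeriesCongr {G : Type*} {H : Type*} [Group G] [Group H]
    (e : G ≃* H) (n : ℕ) : ↥(derivedSeries G n) ≃* ↥(derivedSeries H n) :=
  ((derivedSeries G n).equivMapOfInjective e.toMonoidHom e.injective).trans
    (MulEquiv.subgroupCongr (map_derivedSeries_eq (f := e.toMonoidHom) e.surjective n))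

lemma map_subtype_derivedSeries (G : Type*) [Group G] (n : ℕ) :
    Subgroup.map (commutator G).subtype
      (derivedSeries ↥(commutator G) n) = derivedSeries G (n + 1) := by
  induction n with
  | zero =>
    rw [derivedSeries_zero, ← MonoidHom.range_eq_map, Subgroup.range_subtype,
      derivedSeries_one]
  | succ n ih =>
    rw [derivedSeries_succ, Subgroup.map_commutator, ih]
    exact (derivedSeries_succ G (n+1)).symm

/-- one step down the derived series. -/
noncomputable def derivedStep (G : Type*) [Group G] (n : ℕ) :
    ↥(derivedSeries G (n + 1)) ≃* ↥(derivedSeries ↥(commutator G) n) :=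
  (MulEquiv.subgroupCongr (map_subtype_derivedSeries G n).symm).trans
    ((derivedSeries ↥(commutator G) n).equivMapOfInjective (commutator G).subtype
      (commutator G).subtype_injective).symm

end DerivedTransfer

section Main

/-- `M` is isomorphic to its `PUnit`-indexed power. -/
def punitArrowIso (M : Type*) [Group M] : M ≃* (PUnit → M) where
  toFun m := fun _ => m
  invFun f := f PUnit.unit
  left_inv _ := rfl
  right_inv f := funext fun x => congrArg f (Subsingleton.elim _ _)
  map_mul' _ _ := rfl

theorem Qaux : ∀ (k : ℕ) (G : Type u) [Group G] (J : Type),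
    Nonempty (↥(derivedSeries (J → ↥(KGn G k)) (k + 1)) ≃* ((J × (Fin (k + 1) → ℤ)) → G)) := by
  intro k
  induction k with
  | zero =>
    intro G _ J
    show Nonempty (↥(derivedSeries (J → Wr G Zm) 1) ≃* ((J × (Fin 1 → ℤ)) → G))
    exact ⟨(MulEquiv.subgroupCongr
        (show derivedSeries (J → Wr G Zm) 1 = (rightPi G J).ker by
          rw [derivedSeries_one, commutator_pi_wr])).trans
      ((kerIso G J).trans
        (MulEquiv.arrowCongr
          (Equiv.prodCongr (Equiv.refl J)
            (Multiplicative.toAdd.trans (Equiv.funUnique (Fin 1) ℤ).symm))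
          (MulEquiv.refl G)))⟩
  | succ k ih =>
    intro G _ J
    show Nonempty (↥(derivedSeries (J → Wr (↥(KGn G k)) Zm) (k + 2)) ≃*
      ((J × (Fin (k + 2) → ℤ)) → G))
    obtain ⟨e4⟩ := ih G (J × Zm)
    exact ⟨((derivedStep (J → Wr (↥(KGn G k)) Zm) (k + 1)).trans
        (derivedSeriesCongr
          ((MulEquiv.subgroupCongr (commutator_pi_wr (↥(KGn G k)) J)).trans
            (kerIso (↥(KGn G k)) J)) (k + 1))).trans
      (e4.trans
        (MulEquiv.arrowCongr
          ((Equiv.prodAssoc J Zm (Fin (k + 1) → ℤ)).trans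
            (Equiv.prodCongr (Equiv.refl J)
              ((Equiv.prodCongr Multiplicative.toAdd (Equiv.refl (Fin (k + 1) → ℤ))).trans
                (Fin.consEquiv (fun _ : Fin (k + 2) => ℤ)))))
          (MulEquiv.refl G)))⟩

end Main

/-- For n ≥ 1, the n-th term of the derived series of K_{G,n} (the n-fold iterated wreath
product of G with the infinite cyclic group) is isomorphic to the direct power of G by ℤ^n. -/
theorem stmt_4 (G : Type u) [Group G] (n : ℕ) (hn : 1 ≤ n) :
    Nonempty (↥(derivedSeries ↥(KGn G (n - 1)) n) ≃* ((Fin n → ℤ) → G)) := by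
  obtain ⟨m, rfl⟩ : ∃ m, n = m + 1 := ⟨n - 1, by omega⟩
  obtain ⟨e⟩ := Qaux m G PUnit
  exact ⟨((derivedSeriesCongr (punitArrowIso ↥(KGn G m)) (m + 1)).trans e).trans
    (MulEquiv.arrowCongr (Equiv.punitProd (Fin (m + 1) → ℤ)) (MulEquiv.refl G))⟩
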